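/- Let b > 0, ε real with b + ε > 0 and ε ≠ 0, and set t = (b+ε)/b. Define α = -t² + 2t - 1 + 1 - 4/t + 4/t², i.e., α(b,ε,0) = -t² + 2t + 4/t² - 4/t, β(b,ε,0) = -t³ + t² + t - 3 + 2/t, and γ(b,ε,0) = t⁴ - t² + 2t - 1. Then (α - γ)² - 4β² > 0 and β ≠ 0. -/

import Mathlib

theorem discriminant_pos_at_k_zero (b ε : ℝ) (hb : 0 < b) (hbe : 0 < b + ε) (hε : ε ≠ 0) :
    let t : ℝ := (b + ε) / b
    let α : ℝ := -t ^ 2 + 2 * t + 4 / t ^ 2 - 4 / t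
    let β : ℝ := -t ^ 3 + t ^ 2 + t - 3 + 2 / t
    let γ : ℝ := t ^ 4 - t ^ 2 + 2 * t - 1
    0 < (α - γ) ^ 2 - 4 * β ^ 2 ∧ β ≠ 0 := by
  intro t α β γ
  have ht : 0 < t := div_pos hbe hb
  have ht0 : t ≠ 0 := ne_of_gt ht
  have ht1 : t ≠ 1 := by
    intro h
    apply hε
    have : b + ε = b := by
      have h' : (b + ε) / b = 1 := h
      rw [div_eq_one_iff_eq (ne_of_gt hb)] at h'
      linarith
    linarith
  have htne : t - 1 ≠ 0 := sub_ne_zero.mpr ht1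
  have hsq : (t - 1) ^ 2 > 0 := by positivity
  have hP : 0 < t ^ 5 + 3 * t ^ 4 + t ^ 3 - t ^ 2 + 4 * t + 4 := by
    nlinarith [mul_nonneg (sq_nonneg (t - 1)) ht.le, sq_nonneg (t - 1), pow_pos ht 3,
      pow_pos ht 4, pow_pos ht 5]
  have hQ : 0 < t ^ 5 - t ^ 4 + t ^ 3 + 3 * t ^ 2 - 4 * t + 4 := by
    nlinarith [mul_nonneg (sq_nonneg (t - 1)) (pow_pos ht 3).le, sq_nonneg (t - 1),
      mul_nonneg (sq_nonneg (t - 1)) ht.le]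
  constructor
  · have key : ((α - γ) ^ 2 - 4 * β ^ 2) * t ^ 4 =
        (t - 1) ^ 2 * (t ^ 5 + 3 * t ^ 4 + t ^ 3 - t ^ 2 + 4 * t + 4) *
          (t ^ 5 - t ^ 4 + t ^ 3 + 3 * t ^ 2 - 4 * t + 4) := by
      simp only [α, β, γ]
      field_simp
      ring
    have h4 : (0 : ℝ) < t ^ 4 := by positivity
    nlinarith [mul_pos (mul_pos hsq hP) hQ]
  · intro hβ
    have hcube : 0 < t ^ 3 - t + 2 := by
      nlinarith [mul_nonneg (sq_nonneg (t - 1)) ht.le, sq_nonneg (t - 1)]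
    have key : β * t = -((t - 1) * (t ^ 3 - t + 2)) := by
      simp only [β]; field_simp; ring
    rw [hβ, zero_mul] at key
    have : t - 1 ≠ 0 := sub_ne_zero.mpr ht1
    have := mul_ne_zero this (ne_of_gt hcube)
    simp [eq_comm, neg_eq_zero] at key
    rcases key with h | h
    · exact htne (by linarith)
    · exact (ne_of_gt hcube) h.symm
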